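/- (Edge-isoperimetric inequality, Harper–Lindsey form) For every A ⊆ {0,1}^n, |∇A| ≥ |A| log₂(2^n/|A|), with equality if A is a subcube. -/

import Mathlib

open Finset

def flipC {n : ℕ} (x : Fin n → Bool) (i : Fin n) : Fin n → Bool :=
  Function.update x i (!x i)

/-- `|∇A|`: the number of (ordered) boundary pairs `(x, xⁱ)` with `x ∈ A`, `xⁱ ∉ A`. -/
def edgeBoundary {n : ℕ} (A : Finset (Fin n → Bool)) : ℕ :=
  ∑ x ∈ A, (univ.filter (fun i => flipC x i ∉ A)).card

def IsSubcube {n : ℕ} (k : ℕ) (C : Finset (Fin n → Bool)) : Prop :=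
  ∃ (I : Finset (Fin n)) (z : Fin n → Bool), I.card = k ∧
    C = univ.filter (fun x => ∀ i ∈ I, x i = z i)

/-! ### Analytic lemmas -/

lemma log_one_add_ge (t : ℝ) (h0 : 0 ≤ t) (h1 : t ≤ 1) :
    t * Real.log 2 ≤ Real.log (1 + t) := by
  have hc := strictConcaveOn_log_Ioi.concaveOn.2
    (Set.mem_Ioi.mpr one_pos) (Set.mem_Ioi.mpr two_pos)
    (by linarith : (0:ℝ) ≤ 1 - t) h0 (by ring)
  simp only [smul_eq_mul, Real.log_one, mul_one] at hc
  have : 1 - t + t * 2 = 1 + t := by ring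
  rw [this] at hc; linarith

lemma entropy_ineq (a b : ℝ) (hb : 0 ≤ b) (hba : b ≤ a) :
    a * Real.log a + b * Real.log b + 2 * b * Real.log 2 ≤ (a+b) * Real.log (a+b) := by
  rcases eq_or_lt_of_le hb with rfl | hb'
  · simp
  · have ha : 0 < a := lt_of_lt_of_le hb' hba
    have h1 : b * (Real.log 2 + Real.log b) ≤ b * Real.log (a+b) := by
      rw [← Real.log_mul (by norm_num) (ne_of_gt hb')]
      exact mul_le_mul_of_nonneg_left
        (Real.log_le_log (by linarith) (by linarith)) hb
    have h2 : a * Real.log a + b * Real.log 2 ≤ a * Real.log (a+b) := by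
      have ht := log_one_add_ge (b/a) (by positivity) ((div_le_one ha).mpr hba)
      have : a * ((b/a) * Real.log 2) ≤ a * Real.log (1 + b/a) :=
        mul_le_mul_of_nonneg_left ht (le_of_lt ha)
      have he : Real.log (1 + b/a) = Real.log (a+b) - Real.log a := by
        rw [← Real.log_div (by positivity) (ne_of_gt ha)]
        congr 1; field_simp
      rw [he] at this
      have hb' : a * ((b/a) * Real.log 2) = b * Real.log 2 := by field_simp
      nlinarith [this]
    nlinarith [h1, h2]

lemma logb_helper (k : ℕ) (c : ℝ) (hc : 0 < c) :
    Real.logb 2 (2^k / c) * Real.log 2 = k * Real.log 2 - Real.log c := by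
  rw [Real.logb, div_mul_cancel₀ _ (ne_of_gt (Real.log_pos (by norm_num))),
    Real.log_div (by positivity) (ne_of_gt hc), Real.log_pow]

lemma key (m : ℕ) (a b : ℝ) (hb : 0 ≤ b) (hba : b ≤ a) :
    (a+b) * Real.logb 2 (2^(m+1)/(a+b)) ≤
      a * Real.logb 2 (2^m/a) + b * Real.logb 2 (2^m/b) + (a - b) := by
  have hL : (0:ℝ) < Real.log 2 := Real.log_pos (by norm_num)
  rcases eq_or_lt_of_le (hb.trans hba) with ha0 | ha
  · have hb0 : b = 0 := le_antisymm (hba.trans ha0.symm.le) hb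
    simp [← ha0, hb0]
  · rw [← mul_le_mul_iff_of_pos_right hL]
    have eab : Real.logb 2 (2^(m+1) / (a+b)) * Real.log 2
        = (m+1) * Real.log 2 - Real.log (a+b) := by
      have := logb_helper (m+1) (a+b) (by linarith)
      push_cast at this ⊢; linarith
    have ea := logb_helper m a ha
    have hent := entropy_ineq a b hb hba
    rcases eq_or_lt_of_le hb with rfl | hbpos
    · have : (a + 0) * Real.logb 2 (2 ^ (m + 1) / (a + 0)) * Real.log 2
          = a * ((m+1) * Real.log 2 - Real.log a) := by
        rw [mul_assoc]; rw [add_zero] at eab ⊢; rw [eab]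
      rw [this]
      have : (a * Real.logb 2 (2 ^ m / a) + 0 * Real.logb 2 (2 ^ m / 0) + (a - 0)) * Real.log 2
          = a * (m * Real.log 2 - Real.log a) + a * Real.log 2 := by
        rw [zero_mul, add_zero, sub_zero, add_mul, mul_assoc, ea]
        try ring
      rw [this]; apply le_of_eq; ring
    · have eb := logb_helper m b hbpos
      have g1 : (a+b) * Real.logb 2 (2^(m+1)/(a+b)) * Real.log 2
          = (a+b) * ((m+1) * Real.log 2 - Real.log (a+b)) := by
        rw [mul_assoc, eab]
      have g2 : (a * Real.logb 2 (2^m/a) + b * Real.logb 2 (2^m/b) + (a-b)) * Real.log 2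
          = a * (m * Real.log 2 - Real.log a) + b * (m * Real.log 2 - Real.log b)
            + (a-b) * Real.log 2 := by
        rw [add_mul, add_mul, mul_assoc, mul_assoc, ea, eb]
      rw [g1, g2]; nlinarith [hent]

lemma key' (m : ℕ) (a b : ℝ) (ha : 0 ≤ a) (hb : 0 ≤ b) :
    (a+b) * Real.logb 2 (2^(m+1)/(a+b)) ≤
      a * Real.logb 2 (2^m/a) + b * Real.logb 2 (2^m/b) + |a - b| := by
  rcases le_total b a with h | h
  · have := key m a b hb h
    rw [abs_of_nonneg (by linarith)]; linarith
  · have := key m b a ha h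
    rw [abs_of_nonpos (by linarith), add_comm a b]
    linarith

/-! ### Combinatorial decomposition -/

section Split
variable {n : ℕ} (A : Finset (Fin (n+1) → Bool))

def half (b : Bool) : Finset (Fin n → Bool) :=
  univ.filter (fun y => Fin.cons b y ∈ A)

lemma mem_half {b : Bool} {y : Fin n → Bool} : y ∈ half A b ↔ Fin.cons b y ∈ A := by
  simp [half]

lemma card_half (b : Bool) :
    (half A b).card = (A.filter (fun x => x 0 = b)).card := by
  apply Finset.card_bij' (fun (y : Fin n → Bool) _ => (Fin.cons b y : Fin (n+1) → Bool)) (fun x _ => Fin.tail x)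
  · intro y hy
    rw [mem_filter]
    exact ⟨(mem_half A).mp hy, by simp⟩
  · intro x hx
    rw [mem_filter] at hx
    rw [mem_half, ← hx.2, Fin.cons_self_tail]
    exact hx.1
  · intros
    ext i
    simp [Fin.tail_cons]
  · intro x hx
    rw [mem_filter] at hx
    rw [← hx.2, Fin.cons_self_tail]

lemma card_split : A.card = (half A false).card + (half A true).card := by
  rw [card_half, card_half]
  rw [← Finset.card_filter_add_card_filter_not (p := fun x => x 0 = false)]
  congr 2
  ext x
  simp [Bool.not_eq_false]

lemma flip_cons_zero (b : Bool) (y : Fin n → Bool) :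
    flipC (Fin.cons b y) 0 = Fin.cons (!b) y := by
  unfold flipC
  rw [Fin.cons_zero, Fin.update_cons_zero]

lemma flip_cons_succ (b : Bool) (y : Fin n → Bool) (i : Fin n) :
    flipC (Fin.cons b y) i.succ = Fin.cons b (flipC y i) := by
  unfold flipC
  rw [Fin.cons_succ, Fin.cons_update]

lemma eb_split : edgeBoundary A = edgeBoundary (half A false) + edgeBoundary (half A true)
    + (half A false \ half A true).card + (half A true \ half A false).card := by
  have hhalf : ∀ b : Bool,
      ∑ x ∈ A.filter (fun x => x 0 = b), (univ.filter (fun i => flipC x i ∉ A)).card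
      = edgeBoundary (half A b) + (half A b \ half A (!b)).card := by
    intro b
    have hs : ∑ x ∈ A.filter (fun x => x 0 = b), (univ.filter (fun i => flipC x i ∉ A)).card
        = ∑ y ∈ half A b,
            ((if Fin.cons (!b) y ∉ A then 1 else 0)
              + (univ.filter (fun i => flipC y i ∉ half A b)).card) := by
      apply Finset.sum_bij' (fun x _ => Fin.tail x) (fun (y : Fin n → Bool) _ => (Fin.cons b y : Fin (n+1) → Bool))
      · intro x hx
        rw [mem_filter] at hx
        rw [mem_half, ← hx.2, Fin.cons_self_tail]
        exact hx.1
      · intro y hy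
        rw [mem_filter]
        exact ⟨(mem_half A).mp hy, by simp⟩
      · intro x hx
        rw [mem_filter] at hx
        rw [← hx.2, Fin.cons_self_tail]
      · intros
        ext i
        simp [Fin.tail_cons]
      · intro x hx
        rw [mem_filter] at hx
        obtain ⟨hxA, hx0⟩ := hx
        have hxe : Fin.cons b (Fin.tail x) = x := by rw [← hx0, Fin.cons_self_tail]
        rw [Finset.card_filter, Finset.card_filter, Fin.sum_univ_succ]
        congr 1
        · congr 1
          rw [eq_iff_iff]
          conv_lhs => rw [← hxe, flip_cons_zero]
        · apply Finset.sum_congr rfl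
          intro i _
          congr 1
          rw [eq_iff_iff, mem_half]
          conv_lhs => rw [← hxe, flip_cons_succ]
    have h1 : (∑ y ∈ half A b, if Fin.cons (!b) y ∉ A then 1 else 0)
        = (half A b \ half A (!b)).card := by
      rw [Finset.sdiff_eq_filter, Finset.card_filter]
      apply Finset.sum_congr rfl
      intro y hy
      congr 1
      rw [eq_iff_iff, mem_half]
    rw [hs, Finset.sum_add_distrib, h1, add_comm]
    rfl
  rw [edgeBoundary, ← Finset.sum_filter_add_sum_filter_not A (fun x => x 0 = false)]
  have hneg : A.filter (fun x => ¬ x 0 = false) = A.filter (fun x => x 0 = true) := by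
    apply filter_congr; intro x _; simp
  rw [hneg, hhalf false, hhalf true]
  simp only [Bool.not_false, Bool.not_true]
  ring
end Split

lemma lower : ∀ (n : ℕ) (A : Finset (Fin n → Bool)),
    (A.card : ℝ) * Real.logb 2 (2 ^ n / (A.card : ℝ)) ≤ (edgeBoundary A : ℝ) := by
  intro n
  induction n with
  | zero =>
    intro A
    have hA : A.card ≤ 1 := by simpa using Finset.card_le_univ A
    interval_cases h : A.card <;> simp [h]
  | succ n ih =>
    intro A
    have hc := card_split A
    have he := eb_split A
    set a0 := ((half A false).card : ℝ) with ha0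
    set a1 := ((half A true).card : ℝ) with ha1
    have hk0 : (half A false).card ≤ (half A false \ half A true).card + (half A true).card := by
      calc (half A false).card
          = (half A false \ half A true).card + (half A false ∩ half A true).card :=
            (Finset.card_sdiff_add_card_inter _ _).symm
        _ ≤ _ := Nat.add_le_add_left (Finset.card_le_card Finset.inter_subset_right) _
    have hk1 : (half A true).card ≤ (half A true \ half A false).card + (half A false).card := by
      calc (half A true).card
          = (half A true \ half A false).card + (half A true ∩ half A false).card :=
            (Finset.card_sdiff_add_card_inter _ _).symm
        _ ≤ _ := Nat.add_le_add_left (Finset.card_le_card Finset.inter_subset_right) _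
    have hd : |a0 - a1| ≤ ((half A false \ half A true).card : ℝ)
        + ((half A true \ half A false).card : ℝ) := by
      rw [abs_le]
      constructor
      · have : (a1 : ℝ) ≤ ((half A true \ half A false).card : ℝ) + a0 := by
          rw [ha0, ha1]; exact_mod_cast hk1
        have hnn : (0:ℝ) ≤ ((half A false \ half A true).card : ℝ) := by positivity
        linarith
      · have : (a0 : ℝ) ≤ ((half A false \ half A true).card : ℝ) + a1 := by
          rw [ha0, ha1]; exact_mod_cast hk0
        have hnn : (0:ℝ) ≤ ((half A true \ half A false).card : ℝ) := by positivity
        linarith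
    have hcr : (A.card : ℝ) = a0 + a1 := by rw [hc]; push_cast; ring
    calc (A.card : ℝ) * Real.logb 2 (2 ^ (n+1) / (A.card : ℝ))
        = (a0 + a1) * Real.logb 2 (2 ^ (n+1) / (a0 + a1)) := by rw [hcr]
      _ ≤ a0 * Real.logb 2 (2^n/a0) + a1 * Real.logb 2 (2^n/a1) + |a0 - a1| :=
          key' n a0 a1 (by positivity) (by positivity)
      _ ≤ (edgeBoundary (half A false) : ℝ) + (edgeBoundary (half A true) : ℝ)
            + (((half A false \ half A true).card : ℝ)
              + ((half A true \ half A false).card : ℝ)) := by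
          have h0 := ih (half A false)
          have h1 := ih (half A true)
          linarith
      _ = (edgeBoundary A : ℝ) := by rw [he]; push_cast; ring

lemma subcube_card {n : ℕ} (I : Finset (Fin n)) (z : Fin n → Bool) :
    (univ.filter (fun x : Fin n → Bool => ∀ i ∈ I, x i = z i)).card = 2 ^ (n - I.card) := by
  rw [← Fintype.card_subtype]
  have e : {x : Fin n → Bool // ∀ i ∈ I, x i = z i} ≃ ({i : Fin n // i ∈ Iᶜ} → Bool) :=
    { toFun := fun x i => x.1 i.1
      invFun := fun y => ⟨fun i => if h : i ∈ I then z i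
          else y ⟨i, by simpa using h⟩, fun i hi => by simp [hi]⟩
      left_inv := fun x => by
        apply Subtype.ext
        funext i
        by_cases h : i ∈ I
        · simp [h, x.2 i h]
        · simp [h]
      right_inv := fun y => by
        funext i
        have hni : i.1 ∉ I := Finset.mem_compl.mp i.2
        simp [hni] }
  rw [Fintype.card_congr e]
  simp [Finset.card_compl]

lemma subcube_eb {n : ℕ} (I : Finset (Fin n)) (z : Fin n → Bool) :
    edgeBoundary (univ.filter (fun x : Fin n → Bool => ∀ i ∈ I, x i = z i))
      = 2 ^ (n - I.card) * I.card := by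
  set C := univ.filter (fun x : Fin n → Bool => ∀ i ∈ I, x i = z i) with hC
  have hpt : ∀ x ∈ C, (univ.filter (fun i => flipC x i ∉ C)).card = I.card := by
    intro x hx
    rw [hC, mem_filter] at hx
    have hfe : univ.filter (fun i => flipC x i ∉ C) = I := by
      ext i
      simp only [mem_filter, mem_univ, true_and]
      constructor
      · intro hni
        by_contra hiI
        apply hni
        rw [hC, mem_filter]
        refine ⟨mem_univ _, fun j hj => ?_⟩
        rw [flipC, Function.update_of_ne (by rintro rfl; exact hiI hj)]
        exact hx.2 j hj
      · intro hiI hmem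
        rw [hC, mem_filter] at hmem
        have h1 := hmem.2 i hiI
        rw [flipC, Function.update_self] at h1
        have h2 := hx.2 i hiI
        rw [h2] at h1
        exact Bool.not_ne_self _ h1
    rw [hfe]
  rw [edgeBoundary, Finset.sum_congr rfl hpt, Finset.sum_const, smul_eq_mul, hC, subcube_card]


theorem edge_isoperimetry {n : ℕ} (A : Finset (Fin n → Bool)) :
    (edgeBoundary A : ℝ) ≥ (A.card : ℝ) * Real.logb 2 (2 ^ n / (A.card : ℝ)) ∧
      (∀ k : ℕ, IsSubcube k A →
        (edgeBoundary A : ℝ) = (A.card : ℝ) * Real.logb 2 (2 ^ n / (A.card : ℝ))) := by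
  constructor
  · exact lower n A
  · rintro k ⟨I, z, hIk, rfl⟩
    have hk : I.card ≤ n := by simpa using Finset.card_le_univ I
    rw [subcube_eb, subcube_card]
    have h2 : (2:ℝ) ^ n / (2:ℝ) ^ (n - I.card) = (2:ℝ) ^ I.card := by
      rw [div_eq_iff (by positivity), ← pow_add]
      congr 1
      omega
    push_cast
    rw [h2, Real.logb_pow, Real.logb_self_eq_one (by norm_num)]
    ring
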